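/- Let p, q, r be pairwise coprime positive integers satisfying (p + q + r)^2 = 9pqr. Then there exist positive integers a, b, c with p = a^2, q = b^2, r = c^2, and (a, b, c) is a Markov triple, i.e. a^2 + b^2 + c^2 = 3abc. -/

import Mathlib

lemma nat_sq_of_coprime {a b c : ℕ} (h : Nat.Coprime a b) (heq : a * b = c ^ 2) :
    ∃ d : ℕ, a = d ^ 2 := by
  apply exists_eq_pow_of_mul_eq_pow (c := c) _ heq
  simpa [Nat.isUnit_iff] using (show gcd a b = 1 from h)

/-- If `p, q, r` are pairwise coprime positive integers with `(p + q + r)² = 9pqr`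
(equal anticanonical volume with `ℙ²`), then `p, q, r` are perfect squares `a², b², c²`
and `(a, b, c)` is a Markov triple. -/
theorem weighted_projective_volume_markov (p q r : ℕ) (hp : 0 < p) (hq : 0 < q) (hr : 0 < r)
    (hpq : Nat.Coprime p q) (hpr : Nat.Coprime p r) (hqr : Nat.Coprime q r)
    (h : (p + q + r) ^ 2 = 9 * (p * q * r)) :
    ∃ a b c : ℕ, 0 < a ∧ 0 < b ∧ 0 < c ∧ p = a ^ 2 ∧ q = b ^ 2 ∧ r = c ^ 2 ∧
      a ^ 2 + b ^ 2 + c ^ 2 = 3 * (a * b * c) := by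
  have h3 : 3 ∣ p + q + r := by
    have hd : 3 ∣ (p + q + r) ^ 2 := ⟨3 * (p * q * r), by linarith⟩
    exact Nat.Prime.dvd_of_dvd_pow (by norm_num) hd
  obtain ⟨s, hs⟩ := h3
  have hsq : s ^ 2 = p * q * r := by nlinarith [hs, h]
  obtain ⟨a, ha⟩ : ∃ a, p = a ^ 2 := by
    exact nat_sq_of_coprime (c := s) (hpq.mul_right hpr) (by rw [← mul_assoc, ← hsq])
  obtain ⟨b, hb⟩ : ∃ b, q = b ^ 2 := by
    exact nat_sq_of_coprime (c := s) (hpq.symm.mul_right hqr)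
      (by rw [show q * (p * r) = p * q * r by ring, ← hsq])
  obtain ⟨c, hc⟩ : ∃ c, r = c ^ 2 := by
    exact nat_sq_of_coprime (c := s) (hpr.symm.mul_right hqr.symm)
      (by rw [show r * (p * q) = p * q * r by ring, ← hsq])
  have hsabc : s = a * b * c := by
    have : s ^ 2 = (a * b * c) ^ 2 := by rw [hsq, ha, hb, hc]; ring
    exact Nat.pow_left_injective (by norm_num) this
  refine ⟨a, b, c, ?_, ?_, ?_, ha, hb, hc, ?_⟩
  · exact Nat.pos_of_ne_zero fun h0 => by simp [h0] at ha; omega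
  · exact Nat.pos_of_ne_zero fun h0 => by simp [h0] at hb; omega
  · exact Nat.pos_of_ne_zero fun h0 => by simp [h0] at hc; omega
  · rw [← ha, ← hb, ← hc, hs, hsabc]
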